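/- Suppose for some μ ≥ −k₀⁴ and some ζ ∈ (0,1) there exists a continuous positive function y : [0,1] → ℝ which is C¹ on [0,ζ] and on [ζ,1] (with possibly different one-sided derivatives at ζ), twice differentiable with −y'' = μ y on (0,ζ) ∪ (ζ,1), and satisfies y'(0) − k₀² y(0) = 0, 2 y'(ζ−0) − y(ζ) = 0, 2 y'(ζ+0) + y(ζ) = 0, y'(1) + k₁² y(1) = 0. Then inf{λ₁(q) : q ∈ L¹[0,1], q ≤ 0 a.e., ∫₀¹ q dx = −1} = μ, and moreover μ = inf{ (∫₀¹ y'(x)² dx − y(ζ)² + k₀² y(0)² + k₁² y(1)²) / ∫₀¹ y(x)² dx : y a test function not a.e. zero } (i.e. the infimum is attained at the extended potential −δ_ζ). -/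

import Mathlib

open MeasureTheory Set Real Filter

/-- A test function on `[0,1]`: `y` is absolutely continuous on `[0,1]` with
derivative `g` belonging to `L²[0,1]`. -/
def IsTest (y g : ℝ → ℝ) : Prop :=
  (∀ x ∈ Icc (0:ℝ) 1, y x = y 0 + ∫ t in (0:ℝ)..x, g t) ∧
  IntegrableOn g (Icc (0:ℝ) 1) ∧
  IntegrableOn (fun x => (g x) ^ 2) (Icc (0:ℝ) 1)

/-- The set of Rayleigh quotients of test functions for the Sturm–Liouville problem
`-y'' + q y = λ y`, `y'(0) - k₀² y(0) = 0`, `y'(1) + k₁² y(1) = 0`. -/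
def RayleighSet (k0 k1 : ℝ) (q : ℝ → ℝ) : Set ℝ :=
  { r : ℝ | ∃ y g : ℝ → ℝ, IsTest y g ∧ (0 < ∫ x in (0:ℝ)..1, (y x) ^ 2) ∧
      r = ((∫ x in (0:ℝ)..1, ((g x) ^ 2 + q x * (y x) ^ 2))
            + k0 ^ 2 * (y 0) ^ 2 + k1 ^ 2 * (y 1) ^ 2) / (∫ x in (0:ℝ)..1, (y x) ^ 2) }

/-- The first eigenvalue `λ₁(q)` defined as the infimum of the Rayleigh quotient. -/
noncomputable def lam1 (k0 k1 : ℝ) (q : ℝ → ℝ) : ℝ :=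
  sInf (RayleighSet k0 k1 q)

/-- Existence of a continuous positive solution of `-y'' = μ y` on `(0,ζ) ∪ (ζ,1)` that is
`C¹` on `[0,ζ]` and on `[ζ,1]` (with possibly different one-sided derivatives `dL ζ`, `dR ζ`
at `ζ`), satisfying `y'(0) - k₀² y(0) = 0`, `2 y'(ζ-0) - y(ζ) = 0`, `2 y'(ζ+0) + y(ζ) = 0`
and `y'(1) + k₁² y(1) = 0`. -/
def BrokenSol (k0 k1 μ ζ : ℝ) : Prop :=
  ∃ y dL dR : ℝ → ℝ,
    ContinuousOn y (Icc (0:ℝ) 1) ∧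
    (∀ x ∈ Icc (0:ℝ) 1, 0 < y x) ∧
    (∀ x ∈ Icc (0:ℝ) ζ, HasDerivWithinAt y (dL x) (Icc (0:ℝ) ζ) x) ∧
    (∀ x ∈ Icc ζ (1:ℝ), HasDerivWithinAt y (dR x) (Icc ζ (1:ℝ)) x) ∧
    ContinuousOn dL (Icc (0:ℝ) ζ) ∧
    ContinuousOn dR (Icc ζ (1:ℝ)) ∧
    (∀ x ∈ Ioo (0:ℝ) ζ, HasDerivWithinAt dL (-(μ * y x)) (Icc (0:ℝ) ζ) x) ∧
    (∀ x ∈ Ioo ζ (1:ℝ), HasDerivWithinAt dR (-(μ * y x)) (Icc ζ (1:ℝ)) x) ∧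
    dL 0 - k0 ^ 2 * y 0 = 0 ∧
    2 * dL ζ - y ζ = 0 ∧
    2 * dR ζ + y ζ = 0 ∧
    dR 1 + k1 ^ 2 * y 1 = 0

lemma fub_swap {a b : ℝ} {f h : ℝ → ℝ}
    (hf : IntegrableOn f (Ioc a b)) (hh : IntegrableOn h (Ioc a b)) :
    ∫ t in Ioc a b, f t * (∫ s in Ioc a t, h s)
      = ∫ s in Ioc a b, (∫ t in Ioc s b, f t) * h s := by
  set μ0 := volume.restrict (Ioc a b) with hμ0
  set K : ℝ × ℝ → ℝ := fun p => Set.indicator {p : ℝ × ℝ | p.2 ≤ p.1}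
      (fun p => f p.1 * h p.2) p with hK
  have hmeas : MeasurableSet {p : ℝ × ℝ | p.2 ≤ p.1} :=
    measurableSet_le measurable_snd measurable_fst
  have hKint : Integrable K (μ0.prod μ0) := by
    have hbase : Integrable (fun p : ℝ × ℝ => f p.1 * h p.2) (μ0.prod μ0) :=
      Integrable.mul_prod hf hh
    exact hbase.indicator hmeas
  have hswap : ∫ t, (∫ s, K (t, s) ∂μ0) ∂μ0 = ∫ s, (∫ t, K (t, s) ∂μ0) ∂μ0 :=
    integral_integral_swap hKint
  have hL : ∫ t, (∫ s, K (t, s) ∂μ0) ∂μ0 = ∫ t in Ioc a b, f t * (∫ s in Ioc a t, h s) := by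
    apply setIntegral_congr_fun measurableSet_Ioc
    intro t ht
    show (∫ s, K (t, s) ∂μ0) = f t * (∫ s in Ioc a t, h s)
    have he : (fun s => K (t, s)) = Set.indicator (Iic t) (fun s => f t * h s) := by
      funext s
      simp only [hK, Set.indicator, mem_setOf_eq, mem_Iic]
    rw [he, integral_indicator measurableSet_Iic, hμ0,
      Measure.restrict_restrict measurableSet_Iic]
    have : Iic t ∩ Ioc a b = Ioc a t := by
      ext s; simp only [mem_inter_iff, mem_Iic, mem_Ioc]
      exact ⟨fun ⟨h1, h2, _⟩ => ⟨h2, h1⟩, fun ⟨h1, h2⟩ => ⟨h2, h1, h2.trans ht.2⟩⟩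
    rw [this, integral_const_mul]
  have hR : ∫ s, (∫ t, K (t, s) ∂μ0) ∂μ0 = ∫ s in Ioc a b, (∫ t in Ioc s b, f t) * h s := by
    apply setIntegral_congr_fun measurableSet_Ioc
    intro s hs
    show (∫ t, K (t, s) ∂μ0) = (∫ t in Ioc s b, f t) * h s
    have he : (fun t => K (t, s)) = Set.indicator (Ici s) (fun t => f t * h s) := by
      funext t
      simp only [hK, Set.indicator, mem_setOf_eq, mem_Ici]
    rw [he, integral_indicator measurableSet_Ici, hμ0,
      Measure.restrict_restrict measurableSet_Ici]
    have : Ici s ∩ Ioc a b = Icc s b := by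
      ext t; simp only [mem_inter_iff, mem_Ici, mem_Ioc, mem_Icc]
      exact ⟨fun ⟨h1, _, h3⟩ => ⟨h1, h3⟩, fun ⟨h1, h2⟩ => ⟨h1, hs.1.trans_le h1, h2⟩⟩
    rw [this, integral_Icc_eq_integral_Ioc, integral_mul_const]
  rw [← hL, ← hR] at *
  exact hL ▸ hR ▸ hswap

lemma prim_sq {a b : ℝ} (hab : a ≤ b) {g : ℝ → ℝ}
    (hg : IntegrableOn g (Icc a b)) :
    (∫ t in a..b, g t)^2 = ∫ t in a..b, 2 * (∫ s in a..t, g s) * g t := by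
  have hg' : IntegrableOn g (Ioc a b) := hg.mono_set Ioc_subset_Icc_self
  have hgi : IntervalIntegrable g volume a b := by
    rw [intervalIntegrable_iff_integrableOn_Ioc_of_le hab]; exact hg'
  have hGc : ContinuousOn (fun x => ∫ s in a..x, g s) (Icc a b) := by
    have := intervalIntegral.continuousOn_primitive_interval
      (a := a) (b := b) (f := g) (μ := volume) (by rwa [uIcc_of_le hab])
    rwa [uIcc_of_le hab] at this
  have key := fub_swap (f := g) (h := g) hg' hg'
  have hsb : ∀ s ∈ Ioc a b, (∫ t in Ioc s b, g t) = (∫ t in a..b, g t) - ∫ t in a..s, g t := by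
    intro s hs
    have h1 : IntervalIntegrable g volume a s := hgi.mono_set (by
      rw [uIcc_of_le hs.1.le, uIcc_of_le hab]; exact Icc_subset_Icc le_rfl hs.2)
    have h2 : IntervalIntegrable g volume s b := hgi.mono_set (by
      rw [uIcc_of_le hs.2, uIcc_of_le hab]; exact Icc_subset_Icc hs.1.le le_rfl)
    have hadd := intervalIntegral.integral_add_adjacent_intervals h1 h2
    rw [← intervalIntegral.integral_of_le hs.2]
    linarith [hadd]
  have hGg_int : IntegrableOn (fun s => (∫ t in a..s, g t) * g s) (Ioc a b) :=
    hg'.continuousOn_mul_of_subset hGc isCompact_Icc measurableSet_Ioc Ioc_subset_Icc_self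
  have hI1 : IntegrableOn (fun s => (∫ t in a..b, g t) * g s) (Ioc a b) := hg'.const_mul _
  have hR : (∫ s in Ioc a b, (∫ t in Ioc s b, g t) * g s)
      = (∫ t in a..b, g t) * (∫ s in Ioc a b, g s)
        - ∫ s in Ioc a b, (∫ t in a..s, g t) * g s := by
    have e1 : (∫ s in Ioc a b, (∫ t in Ioc s b, g t) * g s)
        = ∫ s in Ioc a b, ((fun s => (∫ t in a..b, g t) * g s) s
            - (fun s => (∫ t in a..s, g t) * g s) s) := by
      apply setIntegral_congr_fun measurableSet_Ioc
      intro s hs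
      show (∫ t in Ioc s b, g t) * g s = _
      rw [hsb s hs]; ring
    rw [e1, integral_sub hI1 hGg_int, integral_const_mul]
  rw [hR] at key
  have hLG : (∫ t in Ioc a b, g t * (∫ s in Ioc a t, g s))
      = ∫ t in Ioc a b, (∫ s in a..t, g s) * g t := by
    apply setIntegral_congr_fun measurableSet_Ioc
    intro t ht
    show g t * (∫ s in Ioc a t, g s) = (∫ s in a..t, g s) * g t
    rw [intervalIntegral.integral_of_le ht.1.le, mul_comm]
  rw [hLG] at key
  have h2const : ∫ t in Ioc a b, 2 * (∫ s in a..t, g s) * g t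
      = 2 * ∫ t in Ioc a b, (∫ s in a..t, g s) * g t := by
    rw [← integral_const_mul]
    apply setIntegral_congr_fun measurableSet_Ioc
    intro t _
    show 2 * (∫ s in a..t, g s) * g t = _
    ring
  have final : (∫ t in a..b, g t) = ∫ t in Ioc a b, g t := intervalIntegral.integral_of_le hab
  have e2 : ∫ t in a..b, 2 * (∫ s in a..t, g s) * g t
      = 2 * ∫ t in Ioc a b, (∫ s in a..t, g s) * g t := by
    rw [intervalIntegral.integral_of_le hab]; exact h2const
  rw [final] at key
  rw [e2, final]
  have hsq : (∫ t in Ioc a b, g t)^2 = (∫ t in Ioc a b, g t) * (∫ t in Ioc a b, g t) := sq _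
  linarith [key, hsq]

lemma primitive_contOn {a b : ℝ} (hab : a ≤ b) {g : ℝ → ℝ}
    (hg : IntegrableOn g (Icc a b)) :
    ContinuousOn (fun x => ∫ s in a..x, g s) (Icc a b) := by
  have := intervalIntegral.continuousOn_primitive_interval
    (a := a) (b := b) (f := g) (μ := volume) (by rwa [uIcc_of_le hab])
  rwa [uIcc_of_le hab] at this

lemma test_contOn {a b : ℝ} (hab : a ≤ b) {u g : ℝ → ℝ}
    (hu : ∀ x ∈ Icc a b, u x = u a + ∫ t in a..x, g t)
    (hg : IntegrableOn g (Icc a b)) : ContinuousOn u (Icc a b) :=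
  (continuousOn_const.add (primitive_contOn hab hg)).congr (fun x hx => hu x hx)

lemma test_sq {a b : ℝ} (hab : a ≤ b) {u g : ℝ → ℝ}
    (hu : ∀ x ∈ Icc a b, u x = u a + ∫ t in a..x, g t)
    (hg : IntegrableOn g (Icc a b)) :
    ∀ x ∈ Icc a b, (u x)^2 = (u a)^2 + ∫ t in a..x, 2 * u t * g t := by
  intro x hx
  have hgx : IntegrableOn g (Icc a x) := hg.mono_set (Icc_subset_Icc le_rfl hx.2)
  have hsq := prim_sq hx.1 hgx
  have hux := hu x hx
  have hGc : ContinuousOn (fun t => ∫ s in a..t, g s) (Icc a x) :=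
    primitive_contOn hx.1 hgx
  have hgx' : IntegrableOn g (Ioc a x) := hgx.mono_set Ioc_subset_Icc_self
  have e1 : ∫ t in a..x, 2 * u t * g t
      = ∫ t in a..x, (2 * u a * g t + 2 * (∫ s in a..t, g s) * g t) := by
    apply intervalIntegral.integral_congr
    intro t ht
    rw [uIcc_of_le hx.1] at ht
    have hut : u t = u a + ∫ s in a..t, g s := hu t ⟨ht.1, ht.2.trans hx.2⟩
    show 2 * u t * g t = 2 * u a * g t + 2 * (∫ s in a..t, g s) * g t
    rw [hut]; ring
  have hint1 : IntervalIntegrable (fun t => 2 * u a * g t) volume a x := by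
    rw [intervalIntegrable_iff_integrableOn_Ioc_of_le hx.1]
    exact hgx'.const_mul _
  have hint2 : IntervalIntegrable (fun t => 2 * (∫ s in a..t, g s) * g t) volume a x := by
    rw [intervalIntegrable_iff_integrableOn_Ioc_of_le hx.1]
    have h0 : IntegrableOn (fun t => (∫ s in a..t, g s) * g t) (Ioc a x) :=
      hgx'.continuousOn_mul_of_subset hGc isCompact_Icc measurableSet_Ioc Ioc_subset_Icc_self
    have h1 := h0.const_mul (2:ℝ)
    have he : (fun t => 2 * (∫ s in a..t, g s) * g t)
        = fun t => 2 * ((∫ s in a..t, g s) * g t) := by funext t; ring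
    rw [he]; exact h1
  have e2 : ∫ t in a..x, (2 * u a * g t + 2 * (∫ s in a..t, g s) * g t)
      = (∫ t in a..x, 2 * u a * g t) + ∫ t in a..x, 2 * (∫ s in a..t, g s) * g t :=
    intervalIntegral.integral_add hint1 hint2
  have e3 : (∫ t in a..x, 2 * u a * g t) = 2 * u a * ∫ t in a..x, g t := by
    rw [← intervalIntegral.integral_const_mul]
  rw [e1, e2, e3, ← hsq]
  have : (∫ t in a..x, g t) = u x - u a := by rw [hux]; ring
  rw [this]; ring

lemma ibp1 {a b : ℝ} (hab : a ≤ b) {u g φ φ' : ℝ → ℝ}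
    (hu : ∀ x ∈ Icc a b, u x = u a + ∫ t in a..x, g t)
    (hg : IntegrableOn g (Icc a b))
    (hφc : ContinuousOn φ (Icc a b))
    (hφd : ∀ x ∈ Ioo a b, HasDerivAt φ (φ' x) x)
    (hφ'c : ContinuousOn φ' (Icc a b)) :
    (∫ x in a..b, φ' x * u x) + ∫ x in a..b, φ x * g x = φ b * u b - φ a * u a := by
  have hg' : IntegrableOn g (Ioc a b) := hg.mono_set Ioc_subset_Icc_self
  have hGc : ContinuousOn (fun x => ∫ s in a..x, g s) (Icc a b) := primitive_contOn hab hg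
  have hφ'i : IntervalIntegrable φ' volume a b := by
    apply ContinuousOn.intervalIntegrable; rwa [uIcc_of_le hab]
  have hFTC : ∫ x in a..b, φ' x = φ b - φ a :=
    intervalIntegral.integral_eq_sub_of_hasDerivAt_of_le hab hφc hφd hφ'i
  have hφ'int : IntegrableOn φ' (Ioc a b) := by
    rwa [intervalIntegrable_iff_integrableOn_Ioc_of_le hab] at hφ'i
  have hFTCs : ∀ s ∈ Ioc a b, (∫ t in Ioc s b, φ' t) = φ b - φ s := by
    intro s hs
    rw [← intervalIntegral.integral_of_le hs.2]
    apply intervalIntegral.integral_eq_sub_of_hasDerivAt_of_le hs.2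
    · exact hφc.mono (Icc_subset_Icc hs.1.le le_rfl)
    · intro x hx; exact hφd x ⟨hs.1.trans hx.1, hx.2⟩
    · refine hφ'i.mono_set ?_
      rw [uIcc_of_le hs.2, uIcc_of_le hab]
      exact Icc_subset_Icc hs.1.le le_rfl
  -- split ∫ φ' u
  have e1 : ∫ x in a..b, φ' x * u x
      = ∫ x in a..b, (φ' x * u a + φ' x * (∫ t in a..x, g t)) := by
    apply intervalIntegral.integral_congr
    intro x hx
    rw [uIcc_of_le hab] at hx
    show φ' x * u x = φ' x * u a + φ' x * (∫ t in a..x, g t)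
    rw [hu x hx]; ring
  have hint1 : IntervalIntegrable (fun x => φ' x * u a) volume a b := hφ'i.mul_const _
  have hint2 : IntervalIntegrable (fun x => φ' x * (∫ t in a..x, g t)) volume a b := by
    apply ContinuousOn.intervalIntegrable
    rw [uIcc_of_le hab]; exact hφ'c.mul hGc
  have e2 : ∫ x in a..b, (φ' x * u a + φ' x * (∫ t in a..x, g t))
      = (∫ x in a..b, φ' x * u a) + ∫ x in a..b, φ' x * (∫ t in a..x, g t) :=
    intervalIntegral.integral_add hint1 hint2
  have e3 : (∫ x in a..b, φ' x * u a) = (φ b - φ a) * u a := by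
    rw [intervalIntegral.integral_mul_const, hFTC]
  -- the double-integral term
  have e4 : ∫ x in a..b, φ' x * (∫ t in a..x, g t)
      = ∫ x in Ioc a b, φ' x * (∫ t in Ioc a x, g t) := by
    rw [intervalIntegral.integral_of_le hab]
    apply setIntegral_congr_fun measurableSet_Ioc
    intro x hx
    show φ' x * (∫ t in a..x, g t) = _
    rw [intervalIntegral.integral_of_le hx.1.le]
  have e5 := fub_swap (f := φ') (h := g) hφ'int hg'
  have e6 : ∫ s in Ioc a b, (∫ t in Ioc s b, φ' t) * g s
      = ∫ s in Ioc a b, (φ b * g s - φ s * g s) := by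
    apply setIntegral_congr_fun measurableSet_Ioc
    intro s hs
    show (∫ t in Ioc s b, φ' t) * g s = φ b * g s - φ s * g s
    rw [hFTCs s hs]; ring
  have hφg_int : IntegrableOn (fun s => φ s * g s) (Ioc a b) :=
    hg'.continuousOn_mul_of_subset hφc isCompact_Icc measurableSet_Ioc Ioc_subset_Icc_self
  have e7 : ∫ s in Ioc a b, (φ b * g s - φ s * g s)
      = φ b * (∫ s in Ioc a b, g s) - ∫ s in Ioc a b, φ s * g s := by
    rw [← integral_const_mul, ← integral_sub (hg'.const_mul _) hφg_int]
  have hub : (∫ s in Ioc a b, g s) = u b - u a := by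
    rw [← intervalIntegral.integral_of_le hab, hu b ⟨hab, le_rfl⟩]; ring
  have e8 : (∫ x in a..b, φ x * g x) = ∫ s in Ioc a b, φ s * g s :=
    intervalIntegral.integral_of_le hab
  rw [e1, e2, e3, e4, e5, e6, e7, hub, e8]
  ring

lemma intOn_to_ii {a b : ℝ} (hab : a ≤ b) {f : ℝ → ℝ} (hf : IntegrableOn f (Icc a b)) :
    IntervalIntegrable f volume a b := by
  rw [intervalIntegrable_iff_integrableOn_Ioc_of_le hab]
  exact hf.mono_set Ioc_subset_Icc_self

lemma piece_ineq {a b μ : ℝ} (hab : a ≤ b) {u g W W' : ℝ → ℝ}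
    (hu : ∀ x ∈ Icc a b, u x = u a + ∫ t in a..x, g t)
    (hg : IntegrableOn g (Icc a b))
    (hg2 : IntegrableOn (fun x => (g x)^2) (Icc a b))
    (hWc : ContinuousOn W (Icc a b))
    (hWd : ∀ x ∈ Ioo a b, HasDerivAt W (W' x) x)
    (hW'c : ContinuousOn W' (Icc a b))
    (hsub : ∀ x ∈ Icc a b, W' x + (W x)^2 ≤ -μ) :
    μ * (∫ x in a..b, (u x)^2) ≤ (∫ x in a..b, (g x)^2)
      - (W b * (u b)^2 - W a * (u a)^2) := by
  have huc : ContinuousOn u (Icc a b) := test_contOn hab hu hg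
  have husq := test_sq hab hu hg
  have h2ug : IntegrableOn (fun t => 2 * u t * g t) (Icc a b) := by
    have h0 : IntegrableOn (fun t => (2 * u t) * g t) (Icc a b) :=
      IntegrableOn.continuousOn_mul (continuousOn_const.mul huc) hg isCompact_Icc
    have he : (fun t => 2 * u t * g t) = fun t => (2 * u t) * g t := by funext t; ring
    rw [he]; exact h0
  have hibp := ibp1 (u := fun x => (u x)^2) (g := fun t => 2 * u t * g t)
    (φ := W) (φ' := W') hab (fun x hx => husq x hx) h2ug hWc hWd hW'c
  -- integrability pieces
  have hWug : IntegrableOn (fun x => W x * (2 * u x * g x)) (Icc a b) :=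
    IntegrableOn.continuousOn_mul hWc h2ug isCompact_Icc
  have hW2u2 : IntegrableOn (fun x => (W x)^2 * (u x)^2) (Icc a b) :=
    ((hWc.pow 2).mul (huc.pow 2)).integrableOn_compact isCompact_Icc
  have hW'u2 : IntegrableOn (fun x => W' x * (u x)^2) (Icc a b) :=
    IntegrableOn.continuousOn_mul hW'c ((huc.pow 2).integrableOn_compact isCompact_Icc)
      isCompact_Icc
  have hexp : ∫ x in a..b, (g x - W x * u x)^2
      = (∫ x in a..b, (g x)^2) - (∫ x in a..b, W x * (2 * u x * g x))
        + ∫ x in a..b, (W x)^2 * (u x)^2 := by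
    have he : (fun x => (g x - W x * u x)^2)
        = fun x => (g x)^2 - W x * (2 * u x * g x) + (W x)^2 * (u x)^2 := by
      funext x; ring
    rw [he, intervalIntegral.integral_add (((intOn_to_ii hab hg2).sub
      (intOn_to_ii hab hWug))) (intOn_to_ii hab hW2u2),
      intervalIntegral.integral_sub (intOn_to_ii hab hg2) (intOn_to_ii hab hWug)]
  have hnn : 0 ≤ ∫ x in a..b, (g x - W x * u x)^2 := by
    apply intervalIntegral.integral_nonneg hab
    intro x _; positivity
  have hmono : (∫ x in a..b, W' x * (u x)^2) + ∫ x in a..b, (W x)^2 * (u x)^2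
      ≤ -μ * ∫ x in a..b, (u x)^2 := by
    rw [← intervalIntegral.integral_add (intOn_to_ii hab hW'u2) (intOn_to_ii hab hW2u2),
      ← intervalIntegral.integral_const_mul]
    apply intervalIntegral.integral_mono_on hab
    · exact (intOn_to_ii hab hW'u2).add (intOn_to_ii hab hW2u2)
    · exact intOn_to_ii hab (((huc.pow 2).integrableOn_compact isCompact_Icc).const_mul _)
    · intro x hx
      have h1 := hsub x hx
      have h2 : (0:ℝ) ≤ (u x)^2 := sq_nonneg _
      nlinarith
  beta_reduce at hibp
  linarith [hnn, hexp, hibp, hmono]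

lemma riccati_factor {a b μ c : ℝ} (hab : a ≤ b) {w : ℝ → ℝ}
    (hwc : ContinuousOn w (Icc a b))
    (hwd : ∀ x ∈ Ioo a b, HasDerivAt w (-μ - (w x)^2) x)
    (hc : -μ - c^2 ≤ 0) :
    AntitoneOn (fun x => (w x - c) * Real.exp (∫ t in a..x, (w t + c))) (Icc a b) := by
  set P : ℝ → ℝ := fun x => ∫ t in a..x, (w t + c) with hP
  have hwci : IntegrableOn (fun t => w t + c) (Icc a b) :=
    (hwc.add continuousOn_const).integrableOn_compact isCompact_Icc
  have hPc : ContinuousOn P (Icc a b) := primitive_contOn hab hwci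
  have hFc : ContinuousOn (fun x => (w x - c) * Real.exp (P x)) (Icc a b) :=
    (hwc.sub continuousOn_const).mul (Real.continuous_exp.comp_continuousOn hPc)
  have hFd : ∀ x ∈ Ioo a b, HasDerivAt (fun x => (w x - c) * Real.exp (P x))
      ((-μ - c^2) * Real.exp (P x)) x := by
    intro x hx
    have hxIcc : x ∈ Icc a b := Ioo_subset_Icc_self hx
    have hPd : HasDerivAt P (w x + c) x := by
      apply intervalIntegral.integral_hasDerivAt_right
      · apply intOn_to_ii hxIcc.1
        exact hwci.mono_set (Icc_subset_Icc le_rfl hxIcc.2)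
      · exact ((hwc.add continuousOn_const).mono Ioo_subset_Icc_self).stronglyMeasurableAtFilter
          isOpen_Ioo x hx
      · exact ((hwc.add continuousOn_const).continuousAt (Icc_mem_nhds hx.1 hx.2))
    have hExp : HasDerivAt (fun x => Real.exp (P x)) (Real.exp (P x) * (w x + c)) x :=
      hPd.exp
    have := ((hwd x hx).sub_const c).mul hExp
    exact this.congr_deriv (by ring)
  apply antitoneOn_of_deriv_nonpos (convex_Icc a b) hFc
  · intro x hx
    rw [interior_Icc] at hx
    exact (hFd x hx).differentiableAt.differentiableWithinAt
  · intro x hx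
    rw [interior_Icc] at hx
    rw [(hFd x hx).deriv]
    have : (0:ℝ) < Real.exp (P x) := Real.exp_pos _
    nlinarith

lemma riccati_ge {a b μ c : ℝ} (hab : a ≤ b) {w : ℝ → ℝ}
    (hwc : ContinuousOn w (Icc a b))
    (hwd : ∀ x ∈ Ioo a b, HasDerivAt w (-μ - (w x)^2) x)
    (hc : -μ - c^2 ≤ 0) (hwb : w b = c) :
    ∀ x ∈ Icc a b, c ≤ w x := by
  intro x hx
  have hmono := riccati_factor hab hwc hwd hc
  have := hmono hx (right_mem_Icc.mpr hab) hx.2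
  simp only [hwb, sub_self, zero_mul] at this
  have hexp : (0:ℝ) < Real.exp (∫ t in a..x, (w t + c)) := Real.exp_pos _
  nlinarith

lemma riccati_le {a b μ c : ℝ} (hab : a ≤ b) {w : ℝ → ℝ}
    (hwc : ContinuousOn w (Icc a b))
    (hwd : ∀ x ∈ Ioo a b, HasDerivAt w (-μ - (w x)^2) x)
    (hc : -μ - c^2 ≤ 0) (hwa : w a = c) :
    ∀ x ∈ Icc a b, w x ≤ c := by
  intro x hx
  have hmono := riccati_factor hab hwc hwd hc
  have := hmono (left_mem_Icc.mpr hab) hx hx.1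
  simp only [hwa, sub_self, zero_mul] at this
  have hexp : (0:ℝ) < Real.exp (∫ t in a..x, (w t + c)) := Real.exp_pos _
  nlinarith

lemma riccati_const {a b μ c : ℝ} (hab : a ≤ b) {w : ℝ → ℝ}
    (hwc : ContinuousOn w (Icc a b))
    (hwd : ∀ x ∈ Ioo a b, HasDerivAt w (-μ - (w x)^2) x)
    (hc : -μ - c^2 = 0) (hwa : c ≤ w a) :
    c ≤ w b := by
  set P : ℝ → ℝ := fun x => ∫ t in a..x, (w t + c) with hP
  have hwci : IntegrableOn (fun t => w t + c) (Icc a b) :=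
    (hwc.add continuousOn_const).integrableOn_compact isCompact_Icc
  have hPc : ContinuousOn P (Icc a b) := primitive_contOn hab hwci
  have hFc : ContinuousOn (fun x => (w x - c) * Real.exp (P x)) (Icc a b) :=
    (hwc.sub continuousOn_const).mul (Real.continuous_exp.comp_continuousOn hPc)
  have hFd : ∀ x ∈ Ioo a b, HasDerivAt (fun x => (w x - c) * Real.exp (P x))
      ((-μ - c^2) * Real.exp (P x)) x := by
    intro x hx
    have hxIcc : x ∈ Icc a b := Ioo_subset_Icc_self hx
    have hPd : HasDerivAt P (w x + c) x := by
      apply intervalIntegral.integral_hasDerivAt_right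
      · apply intOn_to_ii hxIcc.1
        exact hwci.mono_set (Icc_subset_Icc le_rfl hxIcc.2)
      · exact ((hwc.add continuousOn_const).mono Ioo_subset_Icc_self).stronglyMeasurableAtFilter
          isOpen_Ioo x hx
      · exact ((hwc.add continuousOn_const).continuousAt (Icc_mem_nhds hx.1 hx.2))
    have hExp : HasDerivAt (fun x => Real.exp (P x)) (Real.exp (P x) * (w x + c)) x :=
      hPd.exp
    have := ((hwd x hx).sub_const c).mul hExp
    exact this.congr_deriv (by ring)
  have hmono : MonotoneOn (fun x => (w x - c) * Real.exp (P x)) (Icc a b) := by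
    apply monotoneOn_of_deriv_nonneg (convex_Icc a b) hFc
    · intro x hx
      rw [interior_Icc] at hx
      exact (hFd x hx).differentiableAt.differentiableWithinAt
    · intro x hx
      rw [interior_Icc] at hx
      rw [(hFd x hx).deriv, hc, zero_mul]
  have h1 := hmono (left_mem_Icc.mpr hab) (right_mem_Icc.mpr hab) hab
  simp only at h1
  have hPa : P a = 0 := by simp [hP]
  rw [hPa] at h1
  have hea : (0:ℝ) < Real.exp 0 := Real.exp_pos _
  have heb : (0:ℝ) < Real.exp (P b) := Real.exp_pos _
  nlinarith [h1]


open Topology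

lemma test_restrict {u g : ℝ → ℝ} (hU : ∀ x ∈ Icc (0:ℝ) 1, u x = u 0 + ∫ t in (0:ℝ)..x, g t)
    (hg : IntegrableOn g (Icc (0:ℝ) 1)) {a b : ℝ} (h0a : 0 ≤ a) (hab : a ≤ b) (hb1 : b ≤ 1) :
    ∀ x ∈ Icc a b, u x = u a + ∫ t in a..x, g t := by
  intro x hx
  have hgi : IntervalIntegrable g volume 0 1 := intOn_to_ii (by norm_num) hg
  have h1 : IntervalIntegrable g volume 0 a := by
    refine hgi.mono_set ?_
    rw [uIcc_of_le h0a, uIcc_of_le (zero_le_one)]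
    exact Icc_subset_Icc le_rfl (hab.trans hb1)
  have h2 : IntervalIntegrable g volume a x := by
    refine hgi.mono_set ?_
    rw [uIcc_of_le hx.1, uIcc_of_le (zero_le_one)]
    exact Icc_subset_Icc h0a (hx.2.trans hb1)
  have hadd := intervalIntegral.integral_add_adjacent_intervals h1 h2
  have e1 := hU x ⟨h0a.trans hx.1, hx.2.trans hb1⟩
  have e2 := hU a ⟨h0a, hab.trans hb1⟩
  rw [e1, e2]
  linarith [hadd]

lemma split3 {f : ℝ → ℝ} (hf : IntegrableOn f (Icc (0:ℝ) 1)) {a b : ℝ}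
    (h0a : 0 ≤ a) (hab : a ≤ b) (hb1 : b ≤ 1) :
    ∫ x in (0:ℝ)..1, f x
      = (∫ x in (0:ℝ)..a, f x) + (∫ x in a..b, f x) + ∫ x in b..(1:ℝ), f x := by
  have hfi : IntervalIntegrable f volume 0 1 := intOn_to_ii (by norm_num) hf
  have sub : ∀ c d : ℝ, 0 ≤ c → c ≤ d → d ≤ 1 → IntervalIntegrable f volume c d := by
    intro c d hc hcd hd1
    refine hfi.mono_set ?_
    rw [uIcc_of_le hcd, uIcc_of_le (zero_le_one)]
    exact Icc_subset_Icc hc hd1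
  have e1 := intervalIntegral.integral_add_adjacent_intervals
    (sub 0 a le_rfl h0a (hab.trans hb1)) (sub a b h0a hab hb1)
  have e2 := intervalIntegral.integral_add_adjacent_intervals
    (sub 0 b le_rfl (h0a.trans hab) hb1) (sub b 1 (h0a.trans hab) hb1 le_rfl)
  linarith [e1, e2]

lemma global_ineq (k0 k1 μ ζ : ℝ) (hμ : -k0 ^ 4 ≤ μ) (hζ : ζ ∈ Ioo (0:ℝ) 1)
    (hsol : BrokenSol k0 k1 μ ζ) :
    ∀ z ∈ Icc (0:ℝ) 1, ∀ u g : ℝ → ℝ, IsTest u g →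
      μ * (∫ x in (0:ℝ)..1, (u x)^2) ≤ (∫ x in (0:ℝ)..1, (g x)^2)
        - (u z)^2 + k0^2 * (u 0)^2 + k1^2 * (u 1)^2 := by
  obtain ⟨y, dL, dR, hyc, hypos, hydL, hydR, hdLc, hdRc, hodeL, hodeR, hb0, hbζL, hbζR, hb1⟩ :=
    hsol
  have hζ0 : (0:ℝ) ≤ ζ := hζ.1.le
  have hζ1 : ζ ≤ 1 := hζ.2.le
  have hyL : ∀ x ∈ Icc (0:ℝ) ζ, 0 < y x := fun x hx => hypos x ⟨hx.1, hx.2.trans hζ1⟩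
  have hyR : ∀ x ∈ Icc ζ (1:ℝ), 0 < y x := fun x hx => hypos x ⟨hζ0.trans hx.1, hx.2⟩
  set wL : ℝ → ℝ := fun x => dL x / y x with hwLdef
  set wR : ℝ → ℝ := fun x => dR x / y x with hwRdef
  have hycL : ContinuousOn y (Icc (0:ℝ) ζ) := hyc.mono (Icc_subset_Icc le_rfl hζ1)
  have hycR : ContinuousOn y (Icc ζ (1:ℝ)) := hyc.mono (Icc_subset_Icc hζ0 le_rfl)
  have hwLc : ContinuousOn wL (Icc (0:ℝ) ζ) := hdLc.div hycL (fun x hx => (hyL x hx).ne')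
  have hwRc : ContinuousOn wR (Icc ζ (1:ℝ)) := hdRc.div hycR (fun x hx => (hyR x hx).ne')
  have hwLd : ∀ x ∈ Ioo (0:ℝ) ζ, HasDerivAt wL (-μ - (wL x)^2) x := by
    intro x hx
    have hxI : Icc (0:ℝ) ζ ∈ nhds x := Icc_mem_nhds hx.1 hx.2
    have hy' : HasDerivAt y (dL x) x := (hydL x (Ioo_subset_Icc_self hx)).hasDerivAt hxI
    have hd' : HasDerivAt dL (-(μ * y x)) x := (hodeL x hx).hasDerivAt hxI
    have hyne : y x ≠ 0 := (hyL x (Ioo_subset_Icc_self hx)).ne'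
    have h := hd'.div hy' hyne
    convert h using 1
    show -μ - (dL x / y x)^2 = (-(μ * y x) * y x - dL x * dL x) / y x ^ 2
    rw [div_pow, eq_div_iff (pow_ne_zero 2 hyne)]
    ring_nf
    rw [mul_assoc, ← mul_pow, mul_inv_cancel₀ hyne, one_pow, mul_one]
    all_goals rfl
  have hwRd : ∀ x ∈ Ioo ζ (1:ℝ), HasDerivAt wR (-μ - (wR x)^2) x := by
    intro x hx
    have hxI : Icc ζ (1:ℝ) ∈ nhds x := Icc_mem_nhds hx.1 hx.2
    have hy' : HasDerivAt y (dR x) x := (hydR x (Ioo_subset_Icc_self hx)).hasDerivAt hxI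
    have hd' : HasDerivAt dR (-(μ * y x)) x := (hodeR x hx).hasDerivAt hxI
    have hyne : y x ≠ 0 := (hyR x (Ioo_subset_Icc_self hx)).ne'
    have h := hd'.div hy' hyne
    convert h using 1
    show -μ - (dR x / y x)^2 = (-(μ * y x) * y x - dR x * dR x) / y x ^ 2
    rw [div_pow, eq_div_iff (pow_ne_zero 2 hyne)]
    ring_nf
    rw [mul_assoc, ← mul_pow, mul_inv_cancel₀ hyne, one_pow, mul_one]
    all_goals rfl
  have hy0 : (0:ℝ) < y 0 := hypos 0 ⟨le_rfl, zero_le_one⟩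
  have hyζ : (0:ℝ) < y ζ := hypos ζ ⟨hζ0, hζ1⟩
  have hy1 : (0:ℝ) < y 1 := hypos 1 ⟨zero_le_one, le_rfl⟩
  have hwL0 : wL 0 = k0^2 := by
    show dL 0 / y 0 = k0^2
    field_simp
    linarith [hb0]
  have hwLζ : wL ζ = 1/2 := by
    show dL ζ / y ζ = 1/2
    rw [div_eq_iff hyζ.ne']
    linarith [hbζL]
  have hwRζ : wR ζ = -(1/2) := by
    show dR ζ / y ζ = -(1/2)
    rw [div_eq_iff hyζ.ne']
    linarith [hbζR]
  have hwR1 : wR 1 = -k1^2 := by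
    show dR 1 / y 1 = -k1^2
    rw [div_eq_iff hy1.ne']
    linarith [hb1]
  have hstep1 : -(1/4 : ℝ) ≤ μ := by
    by_contra hcon
    push_neg at hcon
    have hμneg : (0:ℝ) ≤ -μ := by linarith
    have hc2 : Real.sqrt (-μ)^2 = -μ := Real.sq_sqrt hμneg
    have hchalf : 1/2 < Real.sqrt (-μ) := by
      nlinarith [Real.sqrt_nonneg (-μ)]
    have hk0c : Real.sqrt (-μ) ≤ wL 0 := by
      rw [hwL0]
      nlinarith [Real.sqrt_nonneg (-μ), sq_nonneg (k0^2 - Real.sqrt (-μ)),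
        sq_nonneg (k0^2 + Real.sqrt (-μ)), sq_nonneg k0]
    have := riccati_const hζ0 hwLc hwLd (by rw [hc2]; ring) hk0c
    rw [hwLζ] at this
    linarith
  have hstep2 : ∀ x ∈ Icc (0:ℝ) ζ, 1/2 ≤ wL x :=
    riccati_ge hζ0 hwLc hwLd (by norm_num; linarith) hwLζ
  have hstep3 : ∀ x ∈ Icc ζ (1:ℝ), wR x ≤ -(1/2) :=
    riccati_le hζ1 hwRc hwRd (by norm_num; linarith) hwRζ
  intro z hz u g hT
  obtain ⟨hU, hgint, hg2int⟩ := hT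
  have hu2c : ContinuousOn (fun x => (u x)^2) (Icc (0:ℝ) 1) :=
    (test_contOn zero_le_one hU hgint).pow 2
  have hu2int : IntegrableOn (fun x => (u x)^2) (Icc (0:ℝ) 1) :=
    hu2c.integrableOn_compact isCompact_Icc
  rcases le_or_gt z ζ with hzζ | hzζ
  · -- z ≤ ζ : pieces [0,z], [z,ζ], [ζ,1]
    have hz0 : (0:ℝ) ≤ z := hz.1
    have hz1 : z ≤ 1 := hzζ.trans hζ1
    have p1 := piece_ineq (a := 0) (b := z) (μ := μ) (W := wL)
      (W' := fun x => -μ - (wL x)^2) hz0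
      (test_restrict hU hgint le_rfl hz0 hz1)
      (hgint.mono_set (Icc_subset_Icc le_rfl hz1))
      (hg2int.mono_set (Icc_subset_Icc le_rfl hz1))
      (hwLc.mono (Icc_subset_Icc le_rfl hzζ))
      (fun x hx => hwLd x ⟨hx.1, hx.2.trans_le hzζ⟩)
      (continuousOn_const.sub ((hwLc.mono (Icc_subset_Icc le_rfl hzζ)).pow 2))
      (fun x _ => le_of_eq (by ring))
    have p2 := piece_ineq (a := z) (b := ζ) (μ := μ) (W := fun x => wL x - 1)
      (W' := fun x => -μ - (wL x)^2) hzζ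
      (test_restrict hU hgint hz0 hzζ hζ1)
      (hgint.mono_set (Icc_subset_Icc hz0 hζ1))
      (hg2int.mono_set (Icc_subset_Icc hz0 hζ1))
      ((hwLc.mono (Icc_subset_Icc hz0 le_rfl)).sub continuousOn_const)
      (fun x hx => (hwLd x ⟨hz0.trans_lt hx.1, hx.2⟩).sub_const 1)
      (continuousOn_const.sub ((hwLc.mono (Icc_subset_Icc hz0 le_rfl)).pow 2))
      (fun x hx => by
        show (-μ - wL x^2) + (wL x - 1)^2 ≤ -μ
        nlinarith [hstep2 x ⟨hz0.trans hx.1, hx.2⟩])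
    have p3 := piece_ineq (a := ζ) (b := 1) (μ := μ) (W := wR)
      (W' := fun x => -μ - (wR x)^2) hζ1
      (test_restrict hU hgint hζ0 hζ1 le_rfl)
      (hgint.mono_set (Icc_subset_Icc hζ0 le_rfl))
      (hg2int.mono_set (Icc_subset_Icc hζ0 le_rfl))
      hwRc hwRd
      (continuousOn_const.sub (hwRc.pow 2))
      (fun x _ => le_of_eq (by ring))
    have su := split3 hu2int hz0 hzζ hζ1
    have sg := split3 hg2int hz0 hzζ hζ1
    have b1 : wL 0 * u 0^2 = k0^2 * u 0^2 := by rw [hwL0]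
    have b2 : wL ζ * u ζ^2 = 1/2 * u ζ^2 := by rw [hwLζ]
    have b3 : wR ζ * u ζ^2 = -(1/2) * u ζ^2 := by rw [hwRζ]
    have b4 : wR 1 * u 1^2 = -k1^2 * u 1^2 := by rw [hwR1]
    rw [su, sg]
    linarith [p1, p2, p3, b1, b2, b3, b4]
  · -- ζ ≤ z : pieces [0,ζ], [ζ,z], [z,1]
    have hz1 : z ≤ 1 := hz.2
    have hζz : ζ ≤ z := hzζ.le
    have p1 := piece_ineq (a := 0) (b := ζ) (μ := μ) (W := wL)
      (W' := fun x => -μ - (wL x)^2) hζ0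
      (test_restrict hU hgint le_rfl hζ0 hζ1)
      (hgint.mono_set (Icc_subset_Icc le_rfl hζ1))
      (hg2int.mono_set (Icc_subset_Icc le_rfl hζ1))
      hwLc hwLd
      (continuousOn_const.sub (hwLc.pow 2))
      (fun x _ => le_of_eq (by ring))
    have p2 := piece_ineq (a := ζ) (b := z) (μ := μ) (W := fun x => wR x + 1)
      (W' := fun x => -μ - (wR x)^2) hζz
      (test_restrict hU hgint hζ0 hζz hz1)
      (hgint.mono_set (Icc_subset_Icc hζ0 hz1))
      (hg2int.mono_set (Icc_subset_Icc hζ0 hz1))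
      ((hwRc.mono (Icc_subset_Icc le_rfl hz1)).add continuousOn_const)
      (fun x hx => (hwRd x ⟨hx.1, hx.2.trans_le hz1⟩).add_const 1)
      (continuousOn_const.sub ((hwRc.mono (Icc_subset_Icc le_rfl hz1)).pow 2))
      (fun x hx => by
        show (-μ - wR x^2) + (wR x + 1)^2 ≤ -μ
        nlinarith [hstep3 x ⟨hx.1, hx.2.trans hz1⟩])
    have p3 := piece_ineq (a := z) (b := 1) (μ := μ) (W := wR)
      (W' := fun x => -μ - (wR x)^2) hz1
      (test_restrict hU hgint (hζ0.trans hζz) hz1 le_rfl)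
      (hgint.mono_set (Icc_subset_Icc (hζ0.trans hζz) le_rfl))
      (hg2int.mono_set (Icc_subset_Icc (hζ0.trans hζz) le_rfl))
      (hwRc.mono (Icc_subset_Icc hζz le_rfl))
      (fun x hx => hwRd x ⟨hζz.trans_lt hx.1, hx.2⟩)
      (continuousOn_const.sub ((hwRc.mono (Icc_subset_Icc hζz le_rfl)).pow 2))
      (fun x _ => le_of_eq (by ring))
    have su := split3 hu2int hζ0 hζz hz1
    have sg := split3 hg2int hζ0 hζz hz1
    have b1 : wL 0 * u 0^2 = k0^2 * u 0^2 := by rw [hwL0]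
    have b2 : wL ζ * u ζ^2 = 1/2 * u ζ^2 := by rw [hwLζ]
    have b3 : wR ζ * u ζ^2 = -(1/2) * u ζ^2 := by rw [hwRζ]
    have b4 : wR 1 * u 1^2 = -k1^2 * u 1^2 := by rw [hwR1]
    rw [su, sg]
    linarith [p1, p2, p3, b1, b2, b3, b4]


lemma ftc_icc {a b : ℝ} (hab : a ≤ b) {f f' : ℝ → ℝ} (hc : ContinuousOn f (Icc a b))
    (hd : ∀ x ∈ Ioo a b, HasDerivAt f (f' x) x) (hi : ContinuousOn f' (Icc a b)) :
    ∫ x in a..b, f' x = f b - f a :=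
  intervalIntegral.integral_eq_sub_of_hasDerivAt_of_le hab hc hd
    (intOn_to_ii hab (hi.integrableOn_compact isCompact_Icc))

lemma sol_equality (k0 k1 μ ζ : ℝ) (hζ : ζ ∈ Ioo (0:ℝ) 1) (hsol : BrokenSol k0 k1 μ ζ) :
    ∃ u g : ℝ → ℝ, IsTest u g ∧ (0 < ∫ x in (0:ℝ)..1, (u x)^2) ∧
      (∫ x in (0:ℝ)..1, (g x)^2) - (u ζ)^2 + k0^2 * (u 0)^2 + k1^2 * (u 1)^2
        = μ * ∫ x in (0:ℝ)..1, (u x)^2 := by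
  obtain ⟨y, dL, dR, hyc, hypos, hydL, hydR, hdLc, hdRc, hodeL, hodeR, hb0, hbζL, hbζR, hb1⟩ :=
    hsol
  have hζ0 : (0:ℝ) ≤ ζ := hζ.1.le
  have hζ1 : ζ ≤ 1 := hζ.2.le
  set G : ℝ → ℝ := fun x => if x ≤ ζ then dL x else dR x with hGdef
  have hyd' : ∀ t ∈ Ioo (0:ℝ) ζ, HasDerivAt y (dL t) t := fun t ht =>
    (hydL t (Ioo_subset_Icc_self ht)).hasDerivAt (Icc_mem_nhds ht.1 ht.2)
  have hyd'' : ∀ t ∈ Ioo ζ (1:ℝ), HasDerivAt y (dR t) t := fun t ht =>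
    (hydR t (Ioo_subset_Icc_self ht)).hasDerivAt (Icc_mem_nhds ht.1 ht.2)
  have hycL : ContinuousOn y (Icc (0:ℝ) ζ) := hyc.mono (Icc_subset_Icc le_rfl hζ1)
  have hycR : ContinuousOn y (Icc ζ (1:ℝ)) := hyc.mono (Icc_subset_Icc hζ0 le_rfl)
  have hFTCl : ∀ x ∈ Icc (0:ℝ) ζ, (∫ t in (0:ℝ)..x, dL t) = y x - y 0 := by
    intro x hx
    exact ftc_icc hx.1 (hycL.mono (Icc_subset_Icc le_rfl hx.2))
      (fun t ht => hyd' t ⟨ht.1, ht.2.trans_le hx.2⟩)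
      (hdLc.mono (Icc_subset_Icc le_rfl hx.2))
  have hFTCr : ∀ x ∈ Icc ζ (1:ℝ), (∫ t in ζ..x, dR t) = y x - y ζ := by
    intro x hx
    exact ftc_icc hx.1 (hycR.mono (Icc_subset_Icc le_rfl hx.2))
      (fun t ht => hyd'' t ⟨ht.1, ht.2.trans_le hx.2⟩)
      (hdRc.mono (Icc_subset_Icc le_rfl hx.2))
  -- integrability of G and G²
  have hsplitset : Icc (0:ℝ) 1 ⊆ Icc (0:ℝ) ζ ∪ Ioc ζ 1 := by
    intro x hx
    rcases le_or_gt x ζ with h | h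
    · exact Or.inl ⟨hx.1, h⟩
    · exact Or.inr ⟨h, hx.2⟩
  have hGL : IntegrableOn G (Icc (0:ℝ) ζ) := by
    apply (hdLc.integrableOn_compact isCompact_Icc).congr_fun ?_ measurableSet_Icc
    intro x hx; exact (if_pos hx.2).symm
  have hGR : IntegrableOn G (Ioc ζ (1:ℝ)) := by
    apply ((hdRc.integrableOn_compact isCompact_Icc).mono_set Ioc_subset_Icc_self).congr_fun
      ?_ measurableSet_Ioc
    intro x hx; exact (if_neg (not_le.mpr hx.1)).symm
  have hGint : IntegrableOn G (Icc (0:ℝ) 1) := (hGL.union hGR).mono_set hsplitset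
  have hG2L : IntegrableOn (fun x => (G x)^2) (Icc (0:ℝ) ζ) := by
    apply (((hdLc.pow 2)).integrableOn_compact isCompact_Icc).congr_fun ?_ measurableSet_Icc
    intro x hx; show dL x ^ 2 = G x ^ 2; rw [hGdef]; simp [if_pos hx.2]
  have hG2R : IntegrableOn (fun x => (G x)^2) (Ioc ζ (1:ℝ)) := by
    apply (((hdRc.pow 2)).integrableOn_compact isCompact_Icc).mono_set
      Ioc_subset_Icc_self |>.congr_fun ?_ measurableSet_Ioc
    intro x hx; show dR x ^ 2 = G x ^ 2; rw [hGdef]; simp [if_neg (not_le.mpr hx.1)]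
  have hG2int : IntegrableOn (fun x => (G x)^2) (Icc (0:ℝ) 1) :=
    (hG2L.union hG2R).mono_set hsplitset
  -- test property
  have hGii : IntervalIntegrable G volume 0 1 := intOn_to_ii zero_le_one hGint
  have hU : ∀ x ∈ Icc (0:ℝ) 1, y x = y 0 + ∫ t in (0:ℝ)..x, G t := by
    intro x hx
    rcases le_or_gt x ζ with h | h
    · have e : (∫ t in (0:ℝ)..x, G t) = ∫ t in (0:ℝ)..x, dL t := by
        apply intervalIntegral.integral_congr
        intro t ht
        rw [uIcc_of_le hx.1] at ht
        exact if_pos (ht.2.trans h)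
      rw [e, hFTCl x ⟨hx.1, h⟩]; ring
    · have i1 : IntervalIntegrable G volume 0 ζ := by
        refine hGii.mono_set ?_
        rw [uIcc_of_le hζ0, uIcc_of_le zero_le_one]
        exact Icc_subset_Icc le_rfl hζ1
      have i2 : IntervalIntegrable G volume ζ x := by
        refine hGii.mono_set ?_
        rw [uIcc_of_le h.le, uIcc_of_le zero_le_one]
        exact Icc_subset_Icc hζ0 hx.2
      have hadd := intervalIntegral.integral_add_adjacent_intervals i1 i2
      have e1 : (∫ t in (0:ℝ)..ζ, G t) = ∫ t in (0:ℝ)..ζ, dL t := by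
        apply intervalIntegral.integral_congr
        intro t ht
        rw [uIcc_of_le hζ0] at ht
        exact if_pos ht.2
      have e2 : (∫ t in ζ..x, G t) = ∫ t in ζ..x, dR t := by
        rw [intervalIntegral.integral_of_le h.le, intervalIntegral.integral_of_le h.le]
        apply setIntegral_congr_fun measurableSet_Ioc
        intro t ht
        exact if_neg (not_le.mpr ht.1)
      rw [← hadd, e1, e2, hFTCl ζ ⟨hζ0, le_rfl⟩, hFTCr x ⟨h.le, hx.2⟩]
      ring
  have hTest : IsTest y G := ⟨hU, hGint, hG2int⟩
  -- positivity of ∫ y²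
  have hy2ii : IntervalIntegrable (fun x => (y x)^2) volume 0 1 :=
    intOn_to_ii zero_le_one ((hyc.pow 2).integrableOn_compact isCompact_Icc)
  have hpos : 0 < ∫ x in (0:ℝ)..1, (y x)^2 := by
    apply intervalIntegral.intervalIntegral_pos_of_pos_on hy2ii
    · intro x hx
      have := hypos x (Ioo_subset_Icc_self hx)
      positivity
    · exact zero_lt_one
  refine ⟨y, G, hTest, hpos, ?_⟩
  -- energy identities
  have eL : ∫ x in (0:ℝ)..ζ, (-(μ * y x) * y x + dL x * dL x)
      = dL ζ * y ζ - dL 0 * y 0 := by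
    apply ftc_icc hζ0 (hdLc.mul hycL)
    · intro x hx
      exact ((hodeL x hx).hasDerivAt (Icc_mem_nhds hx.1 hx.2)).mul
        ((hydL x (Ioo_subset_Icc_self hx)).hasDerivAt (Icc_mem_nhds hx.1 hx.2))
    · exact ((continuousOn_const (c := μ)).mul (hycL.mul hycL)).neg.add (hdLc.mul hdLc) |>.congr
        (fun x _ => by simp only [Pi.add_apply, Pi.neg_apply, Pi.mul_apply]; ring)
  have eR : ∫ x in ζ..(1:ℝ), (-(μ * y x) * y x + dR x * dR x)
      = dR 1 * y 1 - dR ζ * y ζ := by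
    apply ftc_icc hζ1 (hdRc.mul hycR)
    · intro x hx
      exact ((hodeR x hx).hasDerivAt (Icc_mem_nhds hx.1 hx.2)).mul
        ((hydR x (Ioo_subset_Icc_self hx)).hasDerivAt (Icc_mem_nhds hx.1 hx.2))
    · exact ((continuousOn_const (c := μ)).mul (hycR.mul hycR)).neg.add (hdRc.mul hdRc) |>.congr
        (fun x _ => by simp only [Pi.add_apply, Pi.neg_apply, Pi.mul_apply]; ring)
  -- split energy integrals
  have esplitL : ∫ x in (0:ℝ)..ζ, (-(μ * y x) * y x + dL x * dL x)
      = (∫ x in (0:ℝ)..ζ, (dL x)^2) - μ * ∫ x in (0:ℝ)..ζ, (y x)^2 := by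
    have h1 : IntervalIntegrable (fun x => (dL x)^2) volume 0 ζ :=
      intOn_to_ii hζ0 ((hdLc.pow 2).integrableOn_compact isCompact_Icc)
    have h2 : IntervalIntegrable (fun x => μ * (y x)^2) volume 0 ζ :=
      intOn_to_ii hζ0 ((continuousOn_const.mul (hycL.pow 2)).integrableOn_compact isCompact_Icc)
    have e : ∫ x in (0:ℝ)..ζ, (-(μ * y x) * y x + dL x * dL x)
        = ∫ x in (0:ℝ)..ζ, ((dL x)^2 - μ * (y x)^2) := by
      apply intervalIntegral.integral_congr
      intro x _; show -(μ * y x) * y x + dL x * dL x = (dL x)^2 - μ * (y x)^2; ring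
    rw [e, intervalIntegral.integral_sub h1 h2, intervalIntegral.integral_const_mul]
  have esplitR : ∫ x in ζ..(1:ℝ), (-(μ * y x) * y x + dR x * dR x)
      = (∫ x in ζ..(1:ℝ), (dR x)^2) - μ * ∫ x in ζ..(1:ℝ), (y x)^2 := by
    have h1 : IntervalIntegrable (fun x => (dR x)^2) volume ζ 1 :=
      intOn_to_ii hζ1 ((hdRc.pow 2).integrableOn_compact isCompact_Icc)
    have h2 : IntervalIntegrable (fun x => μ * (y x)^2) volume ζ 1 :=
      intOn_to_ii hζ1 ((continuousOn_const.mul (hycR.pow 2)).integrableOn_compact isCompact_Icc)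
    have e : ∫ x in ζ..(1:ℝ), (-(μ * y x) * y x + dR x * dR x)
        = ∫ x in ζ..(1:ℝ), ((dR x)^2 - μ * (y x)^2) := by
      apply intervalIntegral.integral_congr
      intro x _; show -(μ * y x) * y x + dR x * dR x = (dR x)^2 - μ * (y x)^2; ring
    rw [e, intervalIntegral.integral_sub h1 h2, intervalIntegral.integral_const_mul]
  -- split ∫ G² and ∫ y²
  have hG2a : IntervalIntegrable (fun x => (G x)^2) volume 0 ζ := by
    refine (intOn_to_ii zero_le_one hG2int).mono_set ?_
    rw [uIcc_of_le hζ0, uIcc_of_le zero_le_one]; exact Icc_subset_Icc le_rfl hζ1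
  have hG2b : IntervalIntegrable (fun x => (G x)^2) volume ζ 1 := by
    refine (intOn_to_ii zero_le_one hG2int).mono_set ?_
    rw [uIcc_of_le hζ1, uIcc_of_le zero_le_one]; exact Icc_subset_Icc hζ0 le_rfl
  have hGsplit := intervalIntegral.integral_add_adjacent_intervals hG2a hG2b
  have hy2a : IntervalIntegrable (fun x => (y x)^2) volume 0 ζ := by
    refine hy2ii.mono_set ?_
    rw [uIcc_of_le hζ0, uIcc_of_le zero_le_one]; exact Icc_subset_Icc le_rfl hζ1
  have hy2b : IntervalIntegrable (fun x => (y x)^2) volume ζ 1 := by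
    refine hy2ii.mono_set ?_
    rw [uIcc_of_le hζ1, uIcc_of_le zero_le_one]; exact Icc_subset_Icc hζ0 le_rfl
  have hysplit := intervalIntegral.integral_add_adjacent_intervals hy2a hy2b
  have hGeqL : (∫ x in (0:ℝ)..ζ, (G x)^2) = ∫ x in (0:ℝ)..ζ, (dL x)^2 := by
    apply intervalIntegral.integral_congr
    intro t ht
    rw [uIcc_of_le hζ0] at ht
    show G t ^ 2 = dL t ^ 2
    rw [hGdef]; simp [if_pos ht.2]
  have hGeqR : (∫ x in ζ..(1:ℝ), (G x)^2) = ∫ x in ζ..(1:ℝ), (dR x)^2 := by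
    rw [intervalIntegral.integral_of_le hζ1, intervalIntegral.integral_of_le hζ1]
    apply setIntegral_congr_fun measurableSet_Ioc
    intro t ht
    show G t ^ 2 = dR t ^ 2
    rw [hGdef]; simp [if_neg (not_le.mpr ht.1)]
  -- boundary products
  have hyζ : (0:ℝ) < y ζ := hypos ζ ⟨hζ0, hζ1⟩
  have bb1 : dL 0 * y 0 = k0^2 * (y 0)^2 := by
    have e : dL 0 = k0^2 * y 0 := by linarith
    rw [e]; ring
  have bb2 : dL ζ * y ζ = 1/2 * (y ζ)^2 := by
    have e : dL ζ = y ζ / 2 := by linarith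
    rw [e]; ring
  have bb3 : dR ζ * y ζ = -(1/2) * (y ζ)^2 := by
    have e : dR ζ = -(y ζ / 2) := by linarith
    rw [e]; ring
  have bb4 : dR 1 * y 1 = -k1^2 * (y 1)^2 := by
    have e : dR 1 = -(k1^2 * y 1) := by linarith
    rw [e]; ring
  rw [← hGsplit, ← hysplit, hGeqL, hGeqR]
  linarith [eL, eR, esplitL, esplitR, bb1, bb2, bb3, bb4]


lemma rayleigh_mem_one (k0 k1 : ℝ) (q : ℝ → ℝ) :
    ((∫ x in (0:ℝ)..1, (((fun _ => (0:ℝ)) x) ^ 2 + q x * ((fun _ => (1:ℝ)) x) ^ 2))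
      + k0 ^ 2 * ((fun _ => (1:ℝ)) 0) ^ 2 + k1 ^ 2 * ((fun _ => (1:ℝ)) 1) ^ 2)
      / (∫ x in (0:ℝ)..1, ((fun _ => (1:ℝ)) x) ^ 2) ∈ RayleighSet k0 k1 q := by
  refine ⟨fun _ => 1, fun _ => 0, ⟨?_, ?_, ?_⟩, ?_, rfl⟩
  · intro x _; simp
  · simp [IntegrableOn]
  · simp [IntegrableOn]
  · simp

lemma lam1_lb (k0 k1 μ ζ : ℝ) (hμ : -k0 ^ 4 ≤ μ) (hζ : ζ ∈ Ioo (0:ℝ) 1)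
    (hsol : BrokenSol k0 k1 μ ζ) {q : ℝ → ℝ} (hq : IntegrableOn q (Icc (0:ℝ) 1))
    (hq0 : ∀ᵐ x ∂(volume.restrict (Icc (0:ℝ) 1)), q x ≤ 0)
    (hqm : (∫ x in (0:ℝ)..1, q x) = -1) :
    ∀ r ∈ RayleighSet k0 k1 q, μ ≤ r := by
  rintro r ⟨u, g, hT, hD, hr⟩
  obtain ⟨hU, hgint, hg2int⟩ := hT
  have huc : ContinuousOn u (Icc (0:ℝ) 1) := test_contOn zero_le_one hU hgint
  have hu2c : ContinuousOn (fun x => (u x)^2) (Icc (0:ℝ) 1) := huc.pow 2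
  have hqu2 : IntegrableOn (fun x => q x * (u x)^2) (Icc (0:ℝ) 1) :=
    hq.mul_continuousOn hu2c isCompact_Icc
  have hsplit : (∫ x in (0:ℝ)..1, ((g x)^2 + q x * (u x)^2))
      = (∫ x in (0:ℝ)..1, (g x)^2) + ∫ x in (0:ℝ)..1, q x * (u x)^2 :=
    intervalIntegral.integral_add (intOn_to_ii zero_le_one hg2int)
      (intOn_to_ii zero_le_one hqu2)
  -- max of u²
  obtain ⟨z, hzmem, hzmax⟩ := isCompact_Icc.exists_isMaxOn (α := ℝ)
    (s := Icc (0:ℝ) 1) ⟨0, by norm_num⟩ hu2c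
  have hzmax' : ∀ x ∈ Icc (0:ℝ) 1, (u x)^2 ≤ (u z)^2 := fun x hx => hzmax hx
  -- bound ∫ q u²
  have hq0' : ∀ᵐ x ∂(volume.restrict (Ioc (0:ℝ) 1)), q x ≤ 0 :=
    ae_restrict_of_ae_restrict_of_subset Ioc_subset_Icc_self hq0
  have hquad : -(u z)^2 ≤ ∫ x in (0:ℝ)..1, q x * (u x)^2 := by
    have hmono : ∫ x in Ioc (0:ℝ) 1, q x * (u z)^2 ≤ ∫ x in Ioc (0:ℝ) 1, q x * (u x)^2 := by
      apply integral_mono_ae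
      · exact (hq.mono_set Ioc_subset_Icc_self).mul_const _
      · exact hqu2.mono_set Ioc_subset_Icc_self
      · filter_upwards [hq0', ae_restrict_mem measurableSet_Ioc] with x hqx hxm
        exact mul_le_mul_of_nonpos_left (hzmax' x ⟨hxm.1.le, hxm.2⟩) hqx
    have hconst : ∫ x in Ioc (0:ℝ) 1, q x * (u z)^2 = -(u z)^2 := by
      rw [integral_mul_const, ← intervalIntegral.integral_of_le zero_le_one, hqm]
      ring
    rw [intervalIntegral.integral_of_le zero_le_one]
    linarith [hmono, hconst]
  have hg := global_ineq k0 k1 μ ζ hμ hζ hsol z hzmem u g ⟨hU, hgint, hg2int⟩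
  rw [hr, le_div_iff₀ hD, hsplit]
  linarith [hg, hquad]

lemma lam1_ge_mu (k0 k1 μ ζ : ℝ) (hμ : -k0 ^ 4 ≤ μ) (hζ : ζ ∈ Ioo (0:ℝ) 1)
    (hsol : BrokenSol k0 k1 μ ζ) {q : ℝ → ℝ} (hq : IntegrableOn q (Icc (0:ℝ) 1))
    (hq0 : ∀ᵐ x ∂(volume.restrict (Icc (0:ℝ) 1)), q x ≤ 0)
    (hqm : (∫ x in (0:ℝ)..1, q x) = -1) :
    μ ≤ lam1 k0 k1 q :=
  le_csInf ⟨_, rayleigh_mem_one k0 k1 q⟩ (lam1_lb k0 k1 μ ζ hμ hζ hsol hq hq0 hqm)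


lemma upper_elt (k0 k1 μ ζ : ℝ) (hζ : ζ ∈ Ioo (0:ℝ) 1)
    (hμ : -k0 ^ 4 ≤ μ) (hsol : BrokenSol k0 k1 μ ζ) :
    ∀ ε > (0:ℝ), ∃ q : ℝ → ℝ, IntegrableOn q (Icc (0:ℝ) 1) ∧
      (∀ᵐ x ∂(volume.restrict (Icc (0:ℝ) 1)), q x ≤ 0) ∧
      (∫ x in (0:ℝ)..1, q x) = -1 ∧ lam1 k0 k1 q ≤ μ + ε := by
  intro ε hε
  obtain ⟨u, g, hT, hD, hEq⟩ := sol_equality k0 k1 μ ζ hζ hsol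
  obtain ⟨hU, hgint, hg2int⟩ := hT
  set D := ∫ x in (0:ℝ)..1, (u x)^2 with hDdef
  set ε' := ε * D with hε'def
  have hε' : 0 < ε' := mul_pos hε hD
  have huc : ContinuousOn u (Icc (0:ℝ) 1) := test_contOn zero_le_one hU hgint
  have hu2c : ContinuousOn (fun x => (u x)^2) (Icc (0:ℝ) 1) := huc.pow 2
  have hζmem : ζ ∈ Icc (0:ℝ) 1 := ⟨hζ.1.le, hζ.2.le⟩
  have hcw : ContinuousWithinAt (fun x => (u x)^2) (Icc (0:ℝ) 1) ζ := hu2c ζ hζmem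
  rw [Metric.continuousWithinAt_iff] at hcw
  obtain ⟨δ0, hδ0pos, hδ0⟩ := hcw ε' hε'
  set δ := min (δ0/2) (1 - ζ) with hδdef
  have hδpos : 0 < δ := lt_min (by linarith) (by linarith [hζ.2])
  have hδ1 : ζ + δ ≤ 1 := by
    have := min_le_right (δ0/2) (1 - ζ); linarith
  have hδlt : δ < δ0 := lt_of_le_of_lt (min_le_left _ _) (by linarith)
  set q : ℝ → ℝ := (Ioc ζ (ζ+δ)).indicator (fun _ => -δ⁻¹) with hqdef
  have hsub : Ioc ζ (ζ+δ) ⊆ Ioc (0:ℝ) 1 := Ioc_subset_Ioc hζ.1.le hδ1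
  have hvol : (volume (Ioc ζ (ζ+δ))).toReal = δ := by
    rw [Real.volume_Ioc]
    simp [ENNReal.toReal_ofReal hδpos.le]
  have hqint : IntegrableOn q (Icc (0:ℝ) 1) := by
    rw [hqdef, IntegrableOn, integrable_indicator_iff measurableSet_Ioc]
    apply (integrableOn_const_iff (C := -δ⁻¹)).mpr
    right
    rw [Measure.restrict_apply measurableSet_Ioc]
    exact lt_of_le_of_lt (measure_mono inter_subset_left) measure_Ioc_lt_top
  have hq0 : ∀ᵐ x ∂(volume.restrict (Icc (0:ℝ) 1)), q x ≤ 0 := by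
    apply ae_of_all
    intro x
    rw [hqdef]
    by_cases hx : x ∈ Ioc ζ (ζ+δ)
    · rw [Set.indicator_of_mem hx]
      simp [le_of_lt (inv_pos.mpr hδpos)]
    · rw [Set.indicator_of_notMem hx]
  have hinter : Ioc ζ (ζ+δ) ∩ Ioc (0:ℝ) 1 = Ioc ζ (ζ+δ) := inter_eq_left.mpr hsub
  have hqm : (∫ x in (0:ℝ)..1, q x) = -1 := by
    rw [intervalIntegral.integral_of_le zero_le_one, hqdef,
      integral_indicator measurableSet_Ioc, Measure.restrict_restrict measurableSet_Ioc,
      hinter, setIntegral_const, smul_eq_mul, measureReal_def, hvol]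
    field_simp
  -- the Rayleigh quotient of u with q
  have hqu2 : IntegrableOn (fun x => q x * (u x)^2) (Icc (0:ℝ) 1) :=
    hqint.mul_continuousOn hu2c isCompact_Icc
  have hsplit : (∫ x in (0:ℝ)..1, ((g x)^2 + q x * (u x)^2))
      = (∫ x in (0:ℝ)..1, (g x)^2) + ∫ x in (0:ℝ)..1, q x * (u x)^2 :=
    intervalIntegral.integral_add (intOn_to_ii zero_le_one hg2int)
      (intOn_to_ii zero_le_one hqu2)
  -- bound the potential term
  have hpt : ∀ x ∈ Ioc ζ (ζ+δ), (u ζ)^2 - ε' ≤ (u x)^2 := by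
    intro x hx
    have hxI : x ∈ Icc (0:ℝ) 1 := ⟨hζ.1.le.trans hx.1.le, hx.2.trans hδ1⟩
    have hdist : dist x ζ < δ0 := by
      rw [Real.dist_eq, abs_of_nonneg (by linarith [hx.1.le] : 0 ≤ x - ζ)]
      linarith [hx.2]
    have := hδ0 hxI hdist
    rw [Real.dist_eq] at this
    have := abs_lt.mp this
    linarith [this.1]
  have hquad : (∫ x in (0:ℝ)..1, q x * (u x)^2) ≤ -(u ζ)^2 + ε' := by
    have e1 : (∫ x in (0:ℝ)..1, q x * (u x)^2)
        = ∫ x in Ioc ζ (ζ+δ), -δ⁻¹ * (u x)^2 := by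
      rw [intervalIntegral.integral_of_le zero_le_one]
      have e : (fun x => q x * (u x)^2)
          = (Ioc ζ (ζ+δ)).indicator (fun x => -δ⁻¹ * (u x)^2) := by
        funext x
        rw [hqdef]
        by_cases hx : x ∈ Ioc ζ (ζ+δ)
        · rw [Set.indicator_of_mem hx, Set.indicator_of_mem hx]
        · rw [Set.indicator_of_notMem hx, Set.indicator_of_notMem hx, zero_mul]
      rw [e, integral_indicator measurableSet_Ioc,
        Measure.restrict_restrict measurableSet_Ioc, hinter]
    rw [e1]
    have hmono : ∫ x in Ioc ζ (ζ+δ), -δ⁻¹ * (u x)^2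
        ≤ ∫ x in Ioc ζ (ζ+δ), -δ⁻¹ * ((u ζ)^2 - ε') := by
      apply setIntegral_mono_on
      · refine (((hu2c.mono ?_).integrableOn_compact isCompact_Icc).mono_set
          Ioc_subset_Icc_self).const_mul _
        exact Icc_subset_Icc hζ.1.le hδ1
      · exact (integrableOn_const_iff (C := -δ⁻¹ * ((u ζ)^2 - ε'))).mpr (Or.inr measure_Ioc_lt_top)
      · exact measurableSet_Ioc
      · intro x hx
        have := hpt x hx
        have hi : (0:ℝ) < δ⁻¹ := inv_pos.mpr hδpos
        nlinarith
    have hconst : ∫ x in Ioc ζ (ζ+δ), -δ⁻¹ * ((u ζ)^2 - ε')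
        = -((u ζ)^2) + ε' := by
      rw [setIntegral_const, smul_eq_mul, measureReal_def, hvol]
      field_simp
      ring
    linarith [hmono, hconst]
  -- conclude
  refine ⟨q, hqint, hq0, hqm, ?_⟩
  have hmem : ((∫ x in (0:ℝ)..1, ((g x) ^ 2 + q x * (u x) ^ 2))
      + k0 ^ 2 * (u 0) ^ 2 + k1 ^ 2 * (u 1) ^ 2) / D ∈ RayleighSet k0 k1 q :=
    ⟨u, g, ⟨hU, hgint, hg2int⟩, hD, rfl⟩
  have hbdd : BddBelow (RayleighSet k0 k1 q) :=
    ⟨μ, fun r hr => lam1_lb k0 k1 μ ζ hμ hζ hsol hqint hq0 hqm r hr⟩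
  have hle := csInf_le hbdd hmem
  refine le_trans hle ?_
  rw [div_le_iff₀ hD, hsplit]
  linarith [hEq, hquad]


theorem stmt6 (k0 k1 : ℝ) (hk0 : 0 ≤ k0) (hk01 : k0 ≤ k1)
    (μ ζ : ℝ) (hμ : -k0 ^ 4 ≤ μ) (hζ : ζ ∈ Ioo (0:ℝ) 1)
    (hsol : BrokenSol k0 k1 μ ζ) :
    sInf { r : ℝ | ∃ q : ℝ → ℝ, IntegrableOn q (Icc (0:ℝ) 1) ∧
        (∀ᵐ x ∂(volume.restrict (Icc (0:ℝ) 1)), q x ≤ 0) ∧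
        (∫ x in (0:ℝ)..1, q x) = -1 ∧ r = lam1 k0 k1 q } = μ ∧
    μ = sInf { r : ℝ | ∃ y g : ℝ → ℝ, IsTest y g ∧ (0 < ∫ x in (0:ℝ)..1, (y x) ^ 2) ∧
          r = ((∫ x in (0:ℝ)..1, (g x) ^ 2) - (y ζ) ^ 2
                + k0 ^ 2 * (y 0) ^ 2 + k1 ^ 2 * (y 1) ^ 2) /
              (∫ x in (0:ℝ)..1, (y x) ^ 2) } := by
  constructor
  · -- first assertion
    have hlow : ∀ r ∈ { r : ℝ | ∃ q : ℝ → ℝ, IntegrableOn q (Icc (0:ℝ) 1) ∧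
        (∀ᵐ x ∂(volume.restrict (Icc (0:ℝ) 1)), q x ≤ 0) ∧
        (∫ x in (0:ℝ)..1, q x) = -1 ∧ r = lam1 k0 k1 q }, μ ≤ r := by
      rintro r ⟨q, hq, hq0, hqm, rfl⟩
      exact lam1_ge_mu k0 k1 μ ζ hμ hζ hsol hq hq0 hqm
    have hne : { r : ℝ | ∃ q : ℝ → ℝ, IntegrableOn q (Icc (0:ℝ) 1) ∧
        (∀ᵐ x ∂(volume.restrict (Icc (0:ℝ) 1)), q x ≤ 0) ∧
        (∫ x in (0:ℝ)..1, q x) = -1 ∧ r = lam1 k0 k1 q }.Nonempty := by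
      refine ⟨lam1 k0 k1 (fun _ => -1), fun _ => -1, ?_, ?_, ?_, rfl⟩
      · exact (integrableOn_const_iff (C := (-1:ℝ))).mpr (Or.inr measure_Icc_lt_top)
      · exact ae_of_all _ (fun _ => by norm_num)
      · simp
    apply le_antisymm
    · apply le_of_forall_pos_le_add
      intro ε hε
      obtain ⟨q, hq, hq0, hqm, hle⟩ := upper_elt k0 k1 μ ζ hζ hμ hsol ε hε
      have hmem : lam1 k0 k1 q ∈ { r : ℝ | ∃ q : ℝ → ℝ, IntegrableOn q (Icc (0:ℝ) 1) ∧
          (∀ᵐ x ∂(volume.restrict (Icc (0:ℝ) 1)), q x ≤ 0) ∧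
          (∫ x in (0:ℝ)..1, q x) = -1 ∧ r = lam1 k0 k1 q } := ⟨q, hq, hq0, hqm, rfl⟩
      exact (csInf_le ⟨μ, hlow⟩ hmem).trans hle
    · exact le_csInf hne hlow
  · -- second assertion
    have hlow2 : ∀ r ∈ { r : ℝ | ∃ y g : ℝ → ℝ, IsTest y g ∧
        (0 < ∫ x in (0:ℝ)..1, (y x) ^ 2) ∧
        r = ((∫ x in (0:ℝ)..1, (g x) ^ 2) - (y ζ) ^ 2
              + k0 ^ 2 * (y 0) ^ 2 + k1 ^ 2 * (y 1) ^ 2) /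
            (∫ x in (0:ℝ)..1, (y x) ^ 2) }, μ ≤ r := by
      rintro r ⟨u, g, hT, hD, rfl⟩
      have h := global_ineq k0 k1 μ ζ hμ hζ hsol ζ ⟨hζ.1.le, hζ.2.le⟩ u g hT
      rw [le_div_iff₀ hD]
      linarith
    have hmem2 : μ ∈ { r : ℝ | ∃ y g : ℝ → ℝ, IsTest y g ∧
        (0 < ∫ x in (0:ℝ)..1, (y x) ^ 2) ∧
        r = ((∫ x in (0:ℝ)..1, (g x) ^ 2) - (y ζ) ^ 2
              + k0 ^ 2 * (y 0) ^ 2 + k1 ^ 2 * (y 1) ^ 2) /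
            (∫ x in (0:ℝ)..1, (y x) ^ 2) } := by
      obtain ⟨u, g, hT, hD, hEq⟩ := sol_equality k0 k1 μ ζ hζ hsol
      refine ⟨u, g, hT, hD, ?_⟩
      rw [hEq, mul_div_assoc, div_self hD.ne', mul_one]
    exact le_antisymm (le_csInf ⟨μ, hmem2⟩ hlow2) (csInf_le ⟨μ, hlow2⟩ hmem2)
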